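/- Let T be an invertible generalized hyperbolic operator on a complex Banach space X with splitting X = M ⊕ N, and suppose there exists a nonzero vector y ∈ M ∩ T(N). Let p ∈ ℕ and S : X → X be any map. If h : X → X is a homeomorphism with S = h ∘ T^p ∘ h⁻¹ and sup_{x∈X} ‖h(x) − x‖ < ∞, then there exist uncountably many homeomorphisms g : X → X with S = g ∘ T^p ∘ g⁻¹ and sup_{x∈X} ‖g(x) − x‖ < ∞. Moreover, for every δ > 0, if sup_{x∈X} ‖h(x) − x‖ < δ, then uncountably many such g additionally satisfy sup_{x∈X} ‖g(x) − x‖ < δ. -/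

import Mathlib

noncomputable section

/-- Restriction of a continuous linear map to an invariant subspace. -/
def restrictOp {𝕜 X : Type*} [NontriviallyNormedField 𝕜] [NormedAddCommGroup X]
    [NormedSpace 𝕜 X] (T : X →L[𝕜] X) (M : Submodule 𝕜 X)
    (hM : ∀ x ∈ M, T x ∈ M) : M →L[𝕜] M :=
  (T.comp M.subtypeL).codRestrict M fun x => hM x x.2

/-- `T` is an (invertible) generalized hyperbolic operator: there are closed subspaces
`M`, `N` with `X = M ⊕ N` (topological direct sum), `T(M) ⊆ M` with `σ(T|_M) ⊆ 𝔻`, and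
`T⁻¹(N) ⊆ N` with `σ(T⁻¹|_N) ⊆ 𝔻`. -/
def IsGenHyperbolic {X : Type*} [NormedAddCommGroup X] [NormedSpace ℂ X]
    (T : X ≃L[ℂ] X) : Prop :=
  ∃ (M N : Submodule ℂ X), IsClosed (M : Set X) ∧ IsClosed (N : Set X) ∧
    IsCompl M N ∧
    ∃ (hM : ∀ x ∈ M, T x ∈ M) (hN : ∀ x ∈ N, T.symm x ∈ N),
      spectrum ℂ (restrictOp (T : X →L[ℂ] X) M hM) ⊆ Metric.ball (0 : ℂ) 1 ∧
      spectrum ℂ (restrictOp (T.symm : X →L[ℂ] X) N hN) ⊆ Metric.ball (0 : ℂ) 1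

/-- The sup-norm of the map `F` is finite, i.e. `F` is a bounded map. -/
def BoundedMap {X Y : Type*} [Norm Y] (F : X → Y) : Prop :=
  ∃ C, ∀ x, ‖F x‖ ≤ C

/-- `‖F‖_∞ < ε`. -/
def SupNormLt {X Y : Type*} [Norm Y] (F : X → Y) (ε : ℝ) : Prop :=
  ∃ c, c < ε ∧ ∀ x, ‖F x‖ ≤ c

/-- `Lip(F) < ε`: `F` is Lipschitz with some constant `< ε`. -/
def LipLt {X Y : Type*} [PseudoEMetricSpace X] [PseudoEMetricSpace Y]
    (F : X → Y) (ε : ℝ) : Prop :=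
  ∃ c : NNReal, (c : ℝ) < ε ∧ LipschitzWith c F

/-- The composition `S 0 ∘ S 1 ∘ ⋯ ∘ S (p-1)`. -/
def CompFamily {X : Type*} (p : ℕ) (S : Fin p → X → X) : X → X :=
  (List.ofFn S).foldr (· ∘ ·) id

open Filter Topology

lemma myNotCountableIoo {a b : ℝ} (h : a < b) : ¬ (Set.Ioo a b).Countable := by
  intro hc
  have h1 : (Cardinal.mk ↥(Set.Ioo a b)) ≤ Cardinal.aleph0 := by
    have := hc.to_subtype
    exact Cardinal.mk_le_aleph0
  rw [Cardinal.mk_Ioo_real h] at h1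
  exact absurd h1 (not_le.mpr Cardinal.aleph0_lt_continuum)


lemma restrictOp_pow_coe {𝕜 X : Type*} [NontriviallyNormedField 𝕜] [NormedAddCommGroup X]
    [NormedSpace 𝕜 X] (T : X →L[𝕜] X) (M : Submodule 𝕜 X)
    (hM : ∀ x ∈ M, T x ∈ M) (k : ℕ) (m : M) :
    ((((restrictOp T M hM) ^ k) m : M) : X) = (⇑T)^[k] ↑m := by
  induction k with
  | zero => simp
  | succ k ih =>
    rw [pow_succ', ContinuousLinearMap.mul_apply, Function.iterate_succ',
      Function.comp_apply, ← ih]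
    simp [restrictOp]
    rfl

lemma myPowBound2 {Y : Type*} [NormedAddCommGroup Y] [NormedSpace ℂ Y] [CompleteSpace Y]
    [Nontrivial (Y →L[ℂ] Y)] (a : Y →L[ℂ] Y) (ha : spectrum ℂ a ⊆ Metric.ball 0 1) :
    ∃ (r : ℝ) (N₀ : ℕ), 0 ≤ r ∧ r < 1 ∧ ∀ n, N₀ ≤ n → ‖a ^ n‖ ≤ r ^ n := by
  have hlt : spectralRadius ℂ a < 1 := by
    have := spectrum.spectralRadius_lt_of_forall_lt a (r := 1)
      (fun z hz => by simpa [← NNReal.coe_lt_coe] using mem_ball_zero_iff.mp (ha hz))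
    simpa using this
  obtain ⟨r, hr1, hr2⟩ := ENNReal.lt_iff_exists_nnreal_btwn.mp hlt
  have hg := spectrum.pow_nnnorm_pow_one_div_tendsto_nhds_spectralRadius a
  have hev : ∀ᶠ n : ℕ in atTop, (‖a ^ n‖₊ : ENNReal) ^ (1 / (n:ℝ)) < (r : ENNReal) :=
    hg.eventually_lt_const hr1
  rw [Filter.eventually_atTop] at hev
  obtain ⟨N₀, hN₀⟩ := hev
  refine ⟨r, max N₀ 1, r.coe_nonneg, by exact_mod_cast hr2, fun n hn => ?_⟩
  have hn1 : 1 ≤ n := le_trans (le_max_right _ _) hn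
  have h0 : (n : ℝ) ≠ 0 := by positivity
  have key : (‖a ^ n‖₊ : ENNReal) < (r : ENNReal) ^ n := by
    have h := hN₀ n (le_trans (le_max_left _ _) hn)
    calc (‖a ^ n‖₊ : ENNReal) = ((‖a ^ n‖₊ : ENNReal) ^ (1 / (n:ℝ))) ^ (n : ℝ) := by
          rw [← ENNReal.rpow_mul, one_div, inv_mul_cancel₀ h0, ENNReal.rpow_one]
      _ < (r : ENNReal) ^ (n : ℝ) := by
          apply ENNReal.rpow_lt_rpow h (by positivity)
      _ = (r : ENNReal) ^ n := by rw [ENNReal.rpow_natCast]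
  have : ‖a ^ n‖₊ < r ^ n := by
    rw [← ENNReal.coe_pow] at key
    exact_mod_cast key
  exact_mod_cast this.le

/-- Summability of the orbit sums. -/
lemma mySummable {X : Type*} [NormedAddCommGroup X] [NormedSpace ℂ X]
    {Y : Type*} [NormedAddCommGroup Y] [NormedSpace ℂ Y] [CompleteSpace Y]
    (a : Y →L[ℂ] Y) (r : ℝ) (N₀ : ℕ) (hr0 : 0 ≤ r) (hr1 : r < 1)
    (hb : ∀ n, N₀ ≤ n → ‖a ^ n‖ ≤ r ^ n) (e : ℕ → ℕ) (he : ∀ n, n ≤ e n) (ξ : Y) :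
    Summable (fun n => (a ^ (e n)) ξ) := by
  apply Summable.of_norm_bounded_eventually_nat
    ((summable_geometric_of_lt_one hr0 hr1).mul_left ‖ξ‖)
  rw [Filter.eventually_atTop]
  refine ⟨N₀, fun n hn => ?_⟩
  calc ‖(a ^ (e n)) ξ‖ ≤ ‖a ^ (e n)‖ * ‖ξ‖ := (a ^ (e n)).le_opNorm ξ
    _ ≤ r ^ (e n) * ‖ξ‖ := by
        apply mul_le_mul_of_nonneg_right _ (norm_nonneg ξ)
        exact hb _ (le_trans hn (he n))
    _ ≤ r ^ n * ‖ξ‖ := by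
        apply mul_le_mul_of_nonneg_right _ (norm_nonneg ξ)
        exact pow_le_pow_of_le_one hr0 hr1.le (he n)
    _ = ‖ξ‖ * r ^ n := by ring

set_option maxHeartbeats 1000000 in
lemma myFixedPoint {X : Type*} [NormedAddCommGroup X] [NormedSpace ℂ X] [CompleteSpace X]
    (T : X ≃L[ℂ] X) (M N : Submodule ℂ X)
    (hMc : IsClosed (M : Set X)) (hNc : IsClosed (N : Set X)) (hcompl : IsCompl M N)
    (hM : ∀ x ∈ M, T x ∈ M) (hN : ∀ x ∈ N, T.symm x ∈ N)
    (hsM : spectrum ℂ (restrictOp (T : X →L[ℂ] X) M hM) ⊆ Metric.ball (0 : ℂ) 1)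
    (hsN : spectrum ℂ (restrictOp (T.symm : X →L[ℂ] X) N hN) ⊆ Metric.ball (0 : ℂ) 1)
    (y : X) (hy : y ≠ 0) (hyM : y ∈ M) (hyTN : y ∈ (fun x => T x) '' (N : Set X))
    (p : ℕ) :
    ∃ z : X, z ≠ 0 ∧ ((T : X →L[ℂ] X) ^ (p + 1)) z = z := by
  classical
  obtain ⟨w, hwN, hwy⟩ := hyTN
  have hw0 : w ≠ 0 := by rintro rfl; simp at hwy; exact hy hwy.symm
  haveI : CompleteSpace M := hMc.completeSpace_coe
  haveI : CompleteSpace N := hNc.completeSpace_coe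
  haveI : Nontrivial M := ⟨⟨⟨y, hyM⟩, 0, by simp [hy, Subtype.ext_iff]⟩⟩
  haveI : Nontrivial N := ⟨⟨⟨w, hwN⟩, 0, by simp [hw0, Subtype.ext_iff]⟩⟩
  haveI : Nontrivial (M →L[ℂ] M) := ⟨⟨1, 0, by
    intro hcon
    obtain ⟨m, hm⟩ := exists_ne (0 : M)
    have := DFunLike.congr_fun hcon m
    simp at this
    exact hm this⟩⟩
  haveI : Nontrivial (N →L[ℂ] N) := ⟨⟨1, 0, by
    intro hcon
    obtain ⟨m, hm⟩ := exists_ne (0 : N)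
    have := DFunLike.congr_fun hcon m
    simp at this
    exact hm this⟩⟩
  set AM := restrictOp (T : X →L[ℂ] X) M hM with hAMdef
  set AN := restrictOp (T.symm : X →L[ℂ] X) N hN with hANdef
  obtain ⟨rM, NM, hrM0, hrM1, hbM⟩ := myPowBound2 AM hsM
  obtain ⟨rN, NN, hrN0, hrN1, hbN⟩ := myPowBound2 AN hsN
  set yv : M := ⟨y, hyM⟩ with hyv
  set wv : N := ⟨w, hwN⟩ with hwv
  set fM : ℕ → M := fun n => (AM ^ ((p + 1) * n)) yv with hfMdef
  set fN : ℕ → N := fun n => (AN ^ ((p + 1) * n + p)) wv with hfNdef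
  have hfM : Summable fM :=
    mySummable (X := X) AM rM NM hrM0 hrM1 hbM _ (fun n => Nat.le_mul_of_pos_left n p.succ_pos) yv
  have hfN : Summable fN :=
    mySummable (X := X) AN rN NN hrN0 hrN1 hbN _
      (fun n => le_trans (Nat.le_mul_of_pos_left n p.succ_pos) (Nat.le_add_right _ p)) wv
  set zM : M := ∑' n, fM n with hzMdef
  set zN : N := ∑' n, fN n with hzNdef
  set P : X →L[ℂ] X := (T : X →L[ℂ] X) ^ (p + 1) with hPdef
  have hP : ∀ x : X, P x = (⇑T)^[p + 1] x := by
    intro x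
    rw [hPdef, FunLike.coe_pow_eq_iterate]
    simp
  -- identity on the M side
  have hzM : (AM ^ (p + 1)) zM = zM - yv := by
    have h1 : (AM ^ (p + 1)) zM = ∑' n, (AM ^ (p + 1)) (fM n) :=
      ContinuousLinearMap.map_tsum _ hfM
    have h2 : ∀ n, (AM ^ (p + 1)) (fM n) = fM (n + 1) := by
      intro n
      rw [hfMdef]
      simp only
      rw [← ContinuousLinearMap.mul_apply, ← pow_add,
        show (p + 1) + (p + 1) * n = (p + 1) * (n + 1) from by ring]
    have h3 := hfM.tsum_eq_zero_add
    have hfM0 : fM 0 = yv := by simp [hfMdef]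
    rw [h1]
    simp_rw [h2]
    have : ∑' n, fM (n + 1) = zM - yv := by
      rw [hzMdef, h3, hfM0]; abel
    rw [this]
  have hzM' : P (zM : X) = (zM : X) - y := by
    have h4 := congrArg (Submodule.subtype M) hzM
    simp only [Submodule.coe_subtype] at h4
    erw [restrictOp_pow_coe] at h4
    simp only [ContinuousLinearEquiv.coe_coe] at h4
    rw [hP, h4]
    simp [hyv]
  -- identity on the N side
  have hcoeN : ∀ (k : ℕ) (x : N), (((AN ^ k) x : N) : X) = (⇑T.symm)^[k] ↑x := by
    intro k x
    rw [hANdef]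
    erw [restrictOp_pow_coe]
    simp
  have hLI : Function.LeftInverse ⇑T ⇑T.symm := fun x => T.apply_symm_apply x
  have hcancel : ∀ (k : ℕ) (x : X), (⇑T)^[k] ((⇑T.symm)^[k] x) = x := fun k =>
    hLI.iterate k
  have hTS : ∀ (k l : ℕ) (x : X), (⇑T)^[k] ((⇑T.symm)^[k + l] x) = (⇑T.symm)^[l] x := by
    intro k l x
    rw [Function.iterate_add_apply]
    exact hcancel k _
  have hcoe_tsum : ((zN : X)) = ∑' n, ((fN n : N) : X) := by
    have := ContinuousLinearMap.map_tsum N.subtypeL hfN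
    simpa [hzNdef] using this
  have hsum_coe : Summable (fun n => ((fN n : N) : X)) := by
    exact hfN.map N.subtypeL N.subtypeL.continuous
  set v : ℕ → X := fun n => P ((fN n : N) : X) with hvdef
  have hv : Summable v := hsum_coe.map P P.continuous
  have hv0 : v 0 = y := by
    rw [hvdef]
    simp only
    rw [hP, hcoeN]
    simp only [hwv, Nat.mul_zero, Nat.zero_add]
    rw [Function.iterate_succ', Function.comp_apply, hcancel p w]
    exact hwy
  have hvn : ∀ n, v (n + 1) = ((fN n : N) : X) := by
    intro n
    rw [hvdef]
    simp only
    rw [hP, hcoeN, hcoeN,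
      show (p + 1) * (n + 1) + p = (p + 1) + ((p + 1) * n + p) from by ring]
    exact hTS (p + 1) ((p + 1) * n + p) ↑wv
  have hzN' : P (zN : X) = y + (zN : X) := by
    have h1 : P (zN : X) = ∑' n, v n := by
      rw [hcoe_tsum, ContinuousLinearMap.map_tsum _ hsum_coe]
    rw [h1, hv.tsum_eq_zero_add, hv0]
    congr 1
    simp_rw [hvn]
    exact hcoe_tsum.symm
  -- assemble
  refine ⟨(zM : X) + (zN : X), ?_, ?_⟩
  · intro h0
    have hmem : (zM : X) ∈ M ⊓ N := by
      refine ⟨zM.2, ?_⟩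
      have hneg : (zM : X) = -(zN : X) := eq_neg_of_add_eq_zero_left h0
      rw [hneg]
      exact N.neg_mem zN.2
    rw [hcompl.inf_eq_bot, Submodule.mem_bot] at hmem
    have hzM0 : zM = 0 := by exact_mod_cast hmem
    rw [hzM0, map_zero] at hzM
    have hyv0 : yv = 0 := by
      have h5 : (0 : M) = 0 - yv := hzM
      rw [zero_sub] at h5
      exact (neg_eq_zero.mp h5.symm)
    exact hy (by simpa [hyv, Subtype.ext_iff] using hyv0)
  · rw [map_add, hzM', hzN']
    abel

/-- If `T` is a generalized hyperbolic operator whose splitting `X = M ⊕ N` admits a nonzero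
vector `y ∈ M ∩ T(N)`, then a conjugating homeomorphism at bounded distance from the identity
is never unique: there are uncountably many such homeomorphisms, and the same holds under the
restriction `‖g - I‖_∞ < δ`. -/
theorem genHyperbolic_nonunique_conjugacy
    {X : Type*} [NormedAddCommGroup X] [NormedSpace ℂ X] [CompleteSpace X]
    (T : X ≃L[ℂ] X) (M N : Submodule ℂ X)
    (hMc : IsClosed (M : Set X)) (hNc : IsClosed (N : Set X)) (hcompl : IsCompl M N)
    (hM : ∀ x ∈ M, T x ∈ M) (hN : ∀ x ∈ N, T.symm x ∈ N)
    (hsM : spectrum ℂ (restrictOp (T : X →L[ℂ] X) M hM) ⊆ Metric.ball (0 : ℂ) 1)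
    (hsN : spectrum ℂ (restrictOp (T.symm : X →L[ℂ] X) N hN) ⊆ Metric.ball (0 : ℂ) 1)
    (y : X) (hy : y ≠ 0) (hyM : y ∈ M) (hyTN : y ∈ (fun x => T x) '' (N : Set X))
    (p : ℕ) (S : X → X) (h : X ≃ₜ X)
    (hconj : ∀ x : X, S x = h ((⇑T)^[p + 1] (h.symm x)))
    (hbd : BoundedMap (fun x : X => h x - x)) :
    ¬ Set.Countable {g : X ≃ₜ X | (∀ x : X, S x = g ((⇑T)^[p + 1] (g.symm x))) ∧
        BoundedMap (fun x : X => g x - x)} ∧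
    ∀ δ > (0 : ℝ), SupNormLt (fun x : X => h x - x) δ →
      ¬ Set.Countable {g : X ≃ₜ X | (∀ x : X, S x = g ((⇑T)^[p + 1] (g.symm x))) ∧
          SupNormLt (fun x : X => g x - x) δ} := by
  classical
  obtain ⟨z, hz0, hPz⟩ :=
    myFixedPoint T M N hMc hNc hcompl hM hN hsM hsN y hy hyM hyTN p
  set P : X →L[ℂ] X := (T : X →L[ℂ] X) ^ (p + 1) with hPdef
  have hP : ∀ x : X, (⇑T)^[p + 1] x = P x := by
    intro x
    rw [hPdef, FunLike.coe_pow_eq_iterate]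
    simp
  have hznorm : 0 < ‖z‖ := norm_pos_iff.mpr hz0
  -- the family of conjugating homeomorphisms
  set G : ℝ → X ≃ₜ X := fun t => (Homeomorph.addRight ((t : ℂ) • z)).trans h with hGdef
  have hGapp : ∀ t x, G t x = h (x + (t : ℂ) • z) := by
    intro t x
    simp [hGdef, Homeomorph.trans_apply]
  have hGsymm : ∀ t x, (G t).symm x = h.symm x - (t : ℂ) • z := by
    intro t x
    apply (G t).injective
    rw [Homeomorph.apply_symm_apply, hGapp, sub_add_cancel, Homeomorph.apply_symm_apply]
  have hGconj : ∀ t x, S x = G t ((⇑T)^[p + 1] ((G t).symm x)) := by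
    intro t x
    rw [hGsymm, hGapp, hP]
    have hPP : P (h.symm x - (t : ℂ) • z) + (t : ℂ) • z = P (h.symm x) := by
      rw [map_sub, map_smul, hPz]
      abel
    rw [hPP, ← hP]
    exact hconj x
  have hGinj : Function.Injective G := by
    intro t s hts
    have h1 : G t 0 = G s 0 := by rw [hts]
    rw [hGapp, hGapp, zero_add, zero_add] at h1
    have h2 : (t : ℂ) • z = (s : ℂ) • z := h.injective h1
    have h3 : ((t : ℂ) - s) • z = 0 := by rw [sub_smul, h2, sub_self]
    rcases smul_eq_zero.mp h3 with h4 | h4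
    · have : (t : ℂ) = s := sub_eq_zero.mp h4
      exact_mod_cast this
    · exact absurd h4 hz0
  have hGbd : ∀ (t : ℝ) (C : ℝ), (∀ x, ‖h x - x‖ ≤ C) →
      ∀ x, ‖G t x - x‖ ≤ C + |t| * ‖z‖ := by
    intro t C hC x
    rw [hGapp]
    have : h (x + (t : ℂ) • z) - x
        = (h (x + (t : ℂ) • z) - (x + (t : ℂ) • z)) + (t : ℂ) • z := by abel
    rw [this]
    calc ‖(h (x + (t : ℂ) • z) - (x + (t : ℂ) • z)) + (t : ℂ) • z‖
        ≤ ‖h (x + (t : ℂ) • z) - (x + (t : ℂ) • z)‖ + ‖(t : ℂ) • z‖ := norm_add_le _ _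
      _ ≤ C + |t| * ‖z‖ := by
          gcongr
          · exact hC _
          · rw [norm_smul, Complex.norm_real, Real.norm_eq_abs]
  constructor
  · intro hc
    obtain ⟨C, hC⟩ := hbd
    have hmaps : Set.MapsTo G Set.univ
        {g : X ≃ₜ X | (∀ x : X, S x = g ((⇑T)^[p + 1] (g.symm x))) ∧
          BoundedMap (fun x : X => g x - x)} := by
      intro t _
      exact ⟨hGconj t, ⟨C + |t| * ‖z‖, hGbd t C hC⟩⟩
    have := hmaps.countable_of_injOn (hGinj.injOn) hc
    exact Cardinal.not_countable_real (by simpa using this)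
  · rintro δ hδ ⟨c₀, hc₀δ, hc₀⟩ hc
    set ε : ℝ := (δ - c₀) / ‖z‖ with hεdef
    have hε : 0 < ε := div_pos (by linarith) hznorm
    have hmaps : Set.MapsTo G (Set.Ioo 0 ε)
        {g : X ≃ₜ X | (∀ x : X, S x = g ((⇑T)^[p + 1] (g.symm x))) ∧
          SupNormLt (fun x : X => g x - x) δ} := by
      rintro t ⟨ht0, htε⟩
      refine ⟨hGconj t, ⟨c₀ + |t| * ‖z‖, ?_, hGbd t c₀ hc₀⟩⟩
      have : |t| * ‖z‖ < δ - c₀ := by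
        rw [abs_of_pos ht0]
        calc t * ‖z‖ < ε * ‖z‖ := by gcongr
          _ = δ - c₀ := by rw [hεdef, div_mul_cancel₀ _ hznorm.ne']
      linarith
    exact myNotCountableIoo hε (hmaps.countable_of_injOn (hGinj.injOn) hc)
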